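/- Let $a \in \mathbb{Z}\setminus\{0\}$ be square-free. The series $$\sum_{\substack{(\mu,\lambda)\in\mathbb{Z}^2_{\mathrm{prim}}\\ \mu\neq 0}} \frac{\gcd(a,\mu)}{\sqrt{(\lambda^2+\mu^2)(\lambda^2\mu^2+(\mu^2+a\lambda^2)^2)}}$$ is (absolutely) convergent, i.e. the family of its terms is summable. -/

import Mathlib

/-- Auxiliary: the function `n ↦ (max 1 |n|)^(-3/2)` is summable over `ℤ`. -/
lemma aux_summable_r :
    Summable (fun n : ℤ => ((max 1 |n| : ℤ) : ℝ) ^ (-(3/2) : ℝ)) := by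
  have h1 : Summable (fun n : ℤ => |(n : ℝ)| ^ (-(3/2) : ℝ)) :=
    Real.summable_abs_int_rpow (by norm_num)
  have h2 : Summable (fun n : ℤ => if n = 0 then (1:ℝ) else 0) := by
    apply summable_of_ne_finset_zero (s := {0})
    intro b hb
    simp only [Finset.mem_singleton] at hb
    simp [hb]
  have := h1.add h2
  apply this.congr
  intro n
  by_cases hn : n = 0
  · subst hn
    norm_num
  · have hmax : max 1 |n| = |n| := max_eq_right (Int.one_le_abs hn)
    rw [hmax]
    simp [hn, Int.cast_abs]

/-- Auxiliary: `x^(-3/2) = 1/√(x^3)` for `x ≥ 0`. -/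
lemma aux_rpow_eq (x : ℝ) (hx : 0 ≤ x) :
    x ^ (-(3/2) : ℝ) = 1 / Real.sqrt (x ^ 3) := by
  rw [Real.sqrt_eq_rpow, Real.rpow_neg hx, ← Real.rpow_natCast x 3,
    ← Real.rpow_mul hx]
  norm_num

/-- absolute convergence of the singular series for the non-normal
cubic surface `t₀t₁t₂ + t₃(t₀² + a t₁²) = 0`, `a ≠ 0` square-free. -/
theorem stmt_2 (a : ℤ) (ha : a ≠ 0) (hsq : Squarefree a) :
    Summable (fun p : {p : ℤ × ℤ // (p ≠ 0 ∧ Int.gcd p.1 p.2 = 1) ∧ p.1 ≠ 0} =>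
      (Int.gcd a p.val.1 : ℝ) /
        Real.sqrt (((p.val.2 : ℝ) ^ 2 + (p.val.1 : ℝ) ^ 2) *
          ((p.val.2 : ℝ) ^ 2 * (p.val.1 : ℝ) ^ 2 +
            ((p.val.1 : ℝ) ^ 2 + (a : ℝ) * (p.val.2 : ℝ) ^ 2) ^ 2))) := by
  set r : ℤ → ℝ := fun n => ((max 1 |n| : ℤ) : ℝ) ^ (-(3/2) : ℝ) with hr_def
  have hr : Summable r := aux_summable_r
  have hrnn : ∀ n, 0 ≤ r n := fun n => Real.rpow_nonneg (by positivity) _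
  -- summable majorant on ℤ × ℤ
  have hprod : Summable (fun q : ℤ × ℤ => |(a:ℝ)| * (r q.1 * r q.2)) := by
    apply Summable.mul_left
    exact hr.mul_of_nonneg hr (fun n => hrnn n) (fun n => hrnn n)
  have hsub : Summable (fun p : {p : ℤ × ℤ // (p ≠ 0 ∧ Int.gcd p.1 p.2 = 1) ∧ p.1 ≠ 0} =>
      |(a:ℝ)| * (r p.val.1 * r p.val.2)) :=
    hprod.comp_injective Subtype.coe_injective
  apply Summable.of_nonneg_of_le _ _ hsub
  · intro b
    positivity
  · rintro ⟨⟨μ, lam⟩, ⟨⟨hp0, hgcd⟩, hμ⟩⟩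
    simp only
    -- notation
    set M : ℤ → ℝ := fun n => ((max 1 |n| : ℤ) : ℝ) with hM_def
    have hM1 : ∀ n, (1:ℝ) ≤ M n := by
      intro n
      have h : (1:ℤ) ≤ max 1 |n| := le_max_left _ _
      simp only [hM_def]
      exact_mod_cast h
    have hMpos : ∀ n, (0:ℝ) < M n := fun n => lt_of_lt_of_le one_pos (hM1 n)
    have hrM : ∀ n, r n = 1 / Real.sqrt (M n ^ 3) :=
      fun n => aux_rpow_eq (M n) (hMpos n).le
    -- bound on numerator
    have hnum : (Int.gcd a μ : ℝ) ≤ |(a:ℝ)| := by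
      have hd : (Int.gcd a μ : ℤ) ∣ a := Int.gcd_dvd_left a μ
      have h2 : (Int.gcd a μ : ℤ) ≤ |a| :=
        Int.le_of_dvd (abs_pos.mpr ha) ((dvd_abs _ _).mpr hd)
      calc (Int.gcd a μ : ℝ) ≤ ((|a| : ℤ) : ℝ) := by exact_mod_cast h2
        _ = |(a:ℝ)| := by push_cast; ring
    -- bound on denominator: D ≥ (M μ * M lam)^3
    have hD : (M μ * M lam) ^ 3 ≤
        ((lam:ℝ)^2 + (μ:ℝ)^2) * ((lam:ℝ)^2 * (μ:ℝ)^2 + ((μ:ℝ)^2 + (a:ℝ)*(lam:ℝ)^2)^2) := by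
      by_cases hlam : lam = 0
      · -- then |μ| = 1
        subst hlam
        have : μ.natAbs = 1 := by
          simpa [Int.gcd] using hgcd
        have hμ1 : (μ:ℝ)^2 = 1 := by
          have := Int.natAbs_eq_iff.mp this
          rcases this with h | h <;> subst h <;> norm_num
        have habs : |μ| = 1 := by
          rw [Int.abs_eq_natAbs, this]; rfl
        have hMμ : M μ = 1 := by
          simp only [hM_def, habs]
          norm_num
        rw [hMμ]
        push_cast
        rw [hμ1]
        simp only [hM_def]
        norm_num
      · have hMμ : M μ = |(μ:ℝ)| := by
          simp only [hM_def]
          rw [max_eq_right (Int.one_le_abs hμ)]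
          push_cast [Int.cast_abs]
          rfl
        have hMlam : M lam = |(lam:ℝ)| := by
          simp only [hM_def]
          rw [max_eq_right (Int.one_le_abs hlam)]
          push_cast [Int.cast_abs]
          rfl
        rw [hMμ, hMlam]
        have h1 : |(μ:ℝ)| * |(lam:ℝ)| ≤ (lam:ℝ)^2 + (μ:ℝ)^2 := by
          nlinarith [sq_nonneg (|(μ:ℝ)| - |(lam:ℝ)|), sq_abs (μ:ℝ), sq_abs (lam:ℝ)]
        have h2 : (lam:ℝ)^2 * (μ:ℝ)^2 ≤ (lam:ℝ)^2 * (μ:ℝ)^2 + ((μ:ℝ)^2 + (a:ℝ)*(lam:ℝ)^2)^2 := by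
          nlinarith [sq_nonneg ((μ:ℝ)^2 + (a:ℝ)*(lam:ℝ)^2)]
        have habs : (|(μ:ℝ)| * |(lam:ℝ)|)^3 = ((μ:ℝ)^2 * (lam:ℝ)^2) * (|(μ:ℝ)| * |(lam:ℝ)|) := by
          rw [← sq_abs (μ:ℝ), ← sq_abs (lam:ℝ)]
          ring
        have hμlnn : 0 ≤ |(μ:ℝ)| * |(lam:ℝ)| := by positivity
        calc (|(μ:ℝ)| * |(lam:ℝ)|)^3
            = ((μ:ℝ)^2 * (lam:ℝ)^2) * (|(μ:ℝ)| * |(lam:ℝ)|) := habs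
          _ ≤ ((lam:ℝ)^2 + (μ:ℝ)^2) * ((lam:ℝ)^2 * (μ:ℝ)^2) := by
              have hnn : (0:ℝ) ≤ (μ:ℝ)^2 * (lam:ℝ)^2 := by positivity
              nlinarith [mul_le_mul_of_nonneg_left h1 hnn]
          _ ≤ ((lam:ℝ)^2 + (μ:ℝ)^2) * ((lam:ℝ)^2 * (μ:ℝ)^2 + ((μ:ℝ)^2 + (a:ℝ)*(lam:ℝ)^2)^2) := by
              have hnn2 : (0:ℝ) ≤ (lam:ℝ)^2 + (μ:ℝ)^2 := by positivity
              exact mul_le_mul_of_nonneg_left h2 hnn2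
    -- now combine
    have hMMpos : (0:ℝ) < (M μ * M lam)^3 := by positivity
    have hsqrt : Real.sqrt ((M μ * M lam)^3) ≤
        Real.sqrt (((lam:ℝ)^2 + (μ:ℝ)^2) * ((lam:ℝ)^2 * (μ:ℝ)^2 + ((μ:ℝ)^2 + (a:ℝ)*(lam:ℝ)^2)^2)) :=
      Real.sqrt_le_sqrt hD
    have hsqrtpos : (0:ℝ) < Real.sqrt ((M μ * M lam)^3) := Real.sqrt_pos.mpr hMMpos
    have hkey : (Int.gcd a μ : ℝ) /
        Real.sqrt (((lam:ℝ)^2 + (μ:ℝ)^2) * ((lam:ℝ)^2 * (μ:ℝ)^2 + ((μ:ℝ)^2 + (a:ℝ)*(lam:ℝ)^2)^2))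
        ≤ |(a:ℝ)| / Real.sqrt ((M μ * M lam)^3) := by
      exact div_le_div₀ (abs_nonneg _) hnum hsqrtpos hsqrt
    calc (Int.gcd a μ : ℝ) /
        Real.sqrt (((lam:ℝ)^2 + (μ:ℝ)^2) * ((lam:ℝ)^2 * (μ:ℝ)^2 + ((μ:ℝ)^2 + (a:ℝ)*(lam:ℝ)^2)^2))
        ≤ |(a:ℝ)| / Real.sqrt ((M μ * M lam)^3) := hkey
      _ = |(a:ℝ)| * (r μ * r lam) := by
          rw [hrM, hrM]
          rw [mul_pow, Real.sqrt_mul (by positivity)]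
          field_simp
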